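/- The group of field automorphisms of the complex numbers has cardinality 2^(2^ℵ₀), i.e. the cardinality of the set of ring automorphisms of ℂ equals 2 raised to the power (2 raised to the power ℵ₀). -/

import Mathlib

open Cardinal

noncomputable section CardAut

variable {ι : Type} (v : ι → ℂ)

/-- Extend a permutation of a transcendence basis of `ℂ` to a ring automorphism. -/
noncomputable def autOfPerm (hv : IsTranscendenceBasis ℤ v) (e : Equiv.Perm ι) :
    ℂ ≃+* ℂ :=
  letI := IsAlgClosed.isAlgClosure_of_transcendence_basis v hv
  IsAlgClosure.equivOfEquiv ℂ ℂ
    (hv.1.aevalEquiv.symm.toRingEquiv.trans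
      ((MvPolynomial.renameEquiv ℤ e).toRingEquiv.trans hv.1.aevalEquiv.toRingEquiv))

theorem autOfPerm_apply (hv : IsTranscendenceBasis ℤ v) (e : Equiv.Perm ι) (i : ι) :
    autOfPerm v hv e (v i) = v (e i) := by
  letI := IsAlgClosed.isAlgClosure_of_transcendence_basis v hv
  have h1 : v i = algebraMap (Algebra.adjoin ℤ (Set.range v)) ℂ
      (hv.1.aevalEquiv (MvPolynomial.X i)) := by
    rw [hv.1.algebraMap_aevalEquiv, MvPolynomial.aeval_X]
  rw [autOfPerm, h1, IsAlgClosure.equivOfEquiv_algebraMap]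
  simp only [RingEquiv.coe_trans, Function.comp_apply, AlgEquiv.toRingEquiv_eq_coe,
    AlgEquiv.coe_ringEquiv, AlgEquiv.symm_apply_apply]
  rw [MvPolynomial.renameEquiv_apply, MvPolynomial.rename_X,
    hv.1.algebraMap_aevalEquiv, MvPolynomial.aeval_X]

theorem autOfPerm_injective (hv : IsTranscendenceBasis ℤ v) :
    Function.Injective (autOfPerm v hv) := by
  intro e₁ e₂ h
  ext i
  have := congrArg (fun σ : ℂ ≃+* ℂ => σ (v i)) h
  simp only [autOfPerm_apply v hv] at this
  exact hv.1.injective this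

end CardAut

/-- The group of field automorphisms of the complex numbers has cardinality
`2 ^ (2 ^ ℵ₀)`. -/
theorem card_ringAut_complex :
    Cardinal.mk (ℂ ≃+* ℂ) = 2 ^ ((2 : Cardinal) ^ Cardinal.aleph0) := by
  obtain ⟨s, hs⟩ := exists_isTranscendenceBasis ℤ ℂ
  have hcard : #ℂ = #s :=
    Cardinal.lift_inj.mp (IsAlgClosed.cardinal_eq_cardinal_transcendence_basis_of_aleph0_lt _ hs
      (le_of_eq Cardinal.mk_int) (by rw [mk_complex]; exact Cardinal.aleph0_lt_continuum))
  have hs_card : #s = 𝔠 := by rw [← hcard, mk_complex]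
  have hinf : Infinite s := by
    rw [Cardinal.infinite_iff, hs_card]; exact Cardinal.aleph0_le_continuum
  apply le_antisymm
  · have hinj : Function.Injective (fun σ : ℂ ≃+* ℂ => (σ : ℂ → ℂ)) := fun σ₁ σ₂ h => by
      ext z; exact congrFun h z
    calc #(ℂ ≃+* ℂ) ≤ #(ℂ → ℂ) := Cardinal.mk_le_of_injective hinj
    _ = 𝔠 ^ (𝔠 : Cardinal) := by rw [Cardinal.mk_arrow, Cardinal.lift_id, mk_complex]
    _ = 2 ^ (𝔠 : Cardinal) := Cardinal.power_self_eq Cardinal.aleph0_le_continuum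
    _ = 2 ^ ((2 : Cardinal) ^ Cardinal.aleph0) := by rw [Cardinal.two_power_aleph0]
  · calc (2 : Cardinal) ^ ((2 : Cardinal) ^ Cardinal.aleph0) = 2 ^ #s := by
          rw [hs_card, Cardinal.two_power_aleph0]
    _ = #(Equiv.Perm s) := Cardinal.mk_perm_eq_two_power.symm
    _ ≤ #(ℂ ≃+* ℂ) := Cardinal.mk_le_of_injective (autOfPerm_injective _ hs)
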